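/- Let t ≥ 3 and s > k ≥ 2 be integers. If M is a mutual-visibility set of P_k □ C_t, then M (viewed as a subset of V(P_s □ C_t) via the inclusion {0,...,k-1} ⊆ {0,...,s-1} in the first coordinate) is a mutual-visibility set of P_s □ C_t. -/

import Mathlib

open SimpleGraph

/-- `M` is a mutual-visibility set of `G`: any two vertices of `M` are joined by a
shortest path containing no other vertex of `M`. -/
def IsMutualVisibilitySet {V : Type*} (G : SimpleGraph V) (M : Set V) : Prop :=
  ∀ u ∈ M, ∀ v ∈ M, ∃ p : G.Walk u v, p.IsPath ∧ p.length = G.dist u v ∧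
    ∀ w ∈ p.support, w ∈ M → w = u ∨ w = v

/-- The mutual-visibility number of `G`: the maximum cardinality of a
mutual-visibility set of `G`. -/
noncomputable def mutualVisibilityNumber {V : Type*} (G : SimpleGraph V) : ℕ :=
  sSup {n : ℕ | ∃ M : Set V, IsMutualVisibilitySet G M ∧ M.ncard = n}

/-- The interval `I(u,v)`: the set of vertices lying on shortest `u,v`-paths of `G`. -/
def gInterval {V : Type*} (G : SimpleGraph V) (u v : V) : Set V :=
  {w | ∃ p : G.Walk u v, p.IsPath ∧ p.length = G.dist u v ∧ w ∈ p.support}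

/-- The cyclic distance `|n-k|_t = min(|n-k|, t-|n-k|)` on `{0,…,t-1}`. -/
def cycDist (t : ℕ) (k n : Fin t) : ℕ :=
  min (Nat.dist k.val n.val) (t - Nat.dist k.val n.val)

/-- The cyclic interval `[k,n]_t` on `{0,…,t-1}`. -/
def cycInterval (t : ℕ) (k n : Fin t) : Set (Fin t) :=
  if 2 * cycDist t k n < t then {m : Fin t | m.val ∈ Set.uIcc k.val n.val}
  else if 2 * cycDist t k n = t then Set.univ
  else {m : Fin t | m.val ∉ Set.uIcc k.val n.val} ∪ {k, n}
private lemma walk_shrink {V V' : Type*} {G : SimpleGraph V} {G' : SimpleGraph V'} (f : V' → V)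
    (hf : ∀ a b, G'.Adj a b → f a = f b ∨ G.Adj (f a) (f b)) :
    ∀ {u v : V'} (w : G'.Walk u v), ∃ q : G.Walk (f u) (f v), q.length ≤ w.length := by
  intro u v w
  induction w with
  | nil => exact ⟨.nil, le_rfl⟩
  | @cons a b c h p ih =>
    obtain ⟨q, hq⟩ := ih
    rcases hf _ _ h with he | ha
    · exact ⟨q.copy he.symm rfl, by simpa using hq.trans (Nat.le_succ _)⟩
    · exact ⟨q.cons ha, by simpa using Nat.succ_le_succ hq⟩

theorem mutualVisibilitySet_mono_path (k s t : ℕ) (ht : 3 ≤ t) (hk : 2 ≤ k) (hks : k < s)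
    (M : Set (Fin k × Fin t))
    (hM : IsMutualVisibilitySet (pathGraph k □ cycleGraph t) M) :
    IsMutualVisibilitySet (pathGraph s □ cycleGraph t)
      ((fun p : Fin k × Fin t => (Fin.castLE hks.le p.1, p.2)) '' M) := by
  intro u' hu' v' hv'
  obtain ⟨u, hu, rfl⟩ := hu'
  obtain ⟨v, hv, rfl⟩ := hv'
  obtain ⟨p, hp, hlen, hsupp⟩ := hM u hu v hv
  have hadj : ∀ a b : Fin k × Fin t, (pathGraph k □ cycleGraph t).Adj a b →
      (pathGraph s □ cycleGraph t).Adj (Fin.castLE hks.le a.1, a.2) (Fin.castLE hks.le b.1, b.2) := by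
    intro a b hab
    rw [SimpleGraph.boxProd_adj] at hab ⊢
    rcases hab with ⟨h1, h2⟩ | ⟨h1, h2⟩
    · refine Or.inl ⟨?_, h2⟩
      rw [SimpleGraph.pathGraph_adj] at h1 ⊢
      simpa using h1
    · exact Or.inr ⟨h1, by rw [h2]⟩
  let φ : (pathGraph k □ cycleGraph t) →g (pathGraph s □ cycleGraph t) :=
    ⟨fun p => (Fin.castLE hks.le p.1, p.2), fun h => hadj _ _ h⟩
  have hinj : Function.Injective (φ : Fin k × Fin t → Fin s × Fin t) := by
    intro a b hab
    have hab' : ((Fin.castLE hks.le a.1 : Fin s), a.2) = ((Fin.castLE hks.le b.1 : Fin s), b.2) := hab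
    simp only [Prod.mk.injEq, Fin.castLE_inj] at hab'
    exact Prod.ext hab'.1 hab'.2
  -- the clamping map
  have hk1 : k - 1 < k := by omega
  let f : Fin s × Fin t → Fin k × Fin t := fun x => (⟨min x.1.val (k-1), by omega⟩, x.2)
  have hf : ∀ a b, (pathGraph s □ cycleGraph t).Adj a b →
      f a = f b ∨ (pathGraph k □ cycleGraph t).Adj (f a) (f b) := by
    intro a b hab
    rw [SimpleGraph.boxProd_adj] at hab
    rcases hab with ⟨h1, h2⟩ | ⟨h1, h2⟩
    · rw [SimpleGraph.pathGraph_adj] at h1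
      by_cases hmin : min a.1.val (k-1) = min b.1.val (k-1)
      · exact Or.inl (by simp [f, Prod.ext_iff, Fin.ext_iff, hmin, h2])
      · refine Or.inr ?_
        rw [SimpleGraph.boxProd_adj]
        refine Or.inl ⟨?_, by simp [f, h2]⟩
        rw [SimpleGraph.pathGraph_adj]
        simp only [f]
        omega
    · exact Or.inr (by rw [SimpleGraph.boxProd_adj]
                       exact Or.inr ⟨h1, by simp only [f]; simp [h2]⟩)
  have hfu : ∀ w : Fin k × Fin t, f (φ w) = w := by
    intro w
    have hw : w.1.val < k := w.1.isLt
    show f (Fin.castLE hks.le w.1, w.2) = w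
    simp only [f, Prod.ext_iff, Fin.ext_iff, Fin.coe_castLE]
    refine ⟨?_, trivial⟩
    omega
  -- distance equality
  have hdist : (pathGraph s □ cycleGraph t).dist (φ u) (φ v) = p.length := by
    refine le_antisymm ?_ ?_
    · have := SimpleGraph.dist_le (p.map φ)
      simpa using this
    · obtain ⟨q, hq⟩ := (SimpleGraph.Reachable.exists_walk_length_eq_dist ⟨p.map φ⟩)
      obtain ⟨q', hq'⟩ := walk_shrink f hf q
      have hq2 := SimpleGraph.dist_le (q'.copy (hfu u) (hfu v))
      rw [SimpleGraph.Walk.length_copy] at hq2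
      calc p.length = (pathGraph k □ cycleGraph t).dist u v := hlen
        _ ≤ q'.length := hq2
        _ ≤ q.length := hq'
        _ = _ := hq
  refine ⟨p.map φ, SimpleGraph.Walk.map_isPath_of_injective hinj hp, ?_, ?_⟩
  · rw [SimpleGraph.Walk.length_map]; exact hdist.symm
  · intro w hw hwM
    rw [SimpleGraph.Walk.support_map, List.mem_map] at hw
    obtain ⟨x, hx, rfl⟩ := hw
    obtain ⟨m, hm, hmx⟩ := hwM
    have : m = x := hinj hmx
    subst this
    rcases hsupp m hx hm with h | h
    · exact Or.inl (by rw [h]; rfl)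
    · exact Or.inr (by rw [h]; rfl)
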